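/- For all simple roots α, β ∈ Π, the ℚ(q)-linear endomorphisms of R satisfy E_α F_β − F_β E_α = δ_{αβ} (K_α − K_α⁻¹)/(q − q⁻¹); that is, E_α F_β = F_β E_α whenever α ≠ β, and (q − q⁻¹)(E_α F_α − F_α E_α) = K_α − K_α⁻¹. -/

import Mathlib

/-!
The adjoint representation of a simply-laced quantum group, realized concretely on the
`ℚ(q)`-vector space with basis `{x_μ : μ ∈ Φ} ∪ {h_α : α ∈ Π}`.
-/

noncomputable section

open Polynomial

/-- The field `ℚ(q)` of rational functions over `ℚ`. -/
abbrev Qq : Type := RatFunc ℚ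

/-- The indeterminate `q ∈ ℚ(q)`. -/
def qv : Qq := RatFunc.X

/-- A datum abstracting a simply-laced root system `Φ` with base `Π`, normalized so that
`(α, α) = 2` for roots: a symmetric bilinear form `B` together with the standard
combinatorial facts about pairings of roots and simple roots that hold in any finite
reduced irreducible crystallographic simply-laced root system. -/
structure SimplyLacedDatum (E : Type) [AddCommGroup E] [Module ℚ E] where
  /-- the inner product `(·,·)` -/
  B : E →ₗ[ℚ] E →ₗ[ℚ] ℚ
  symm : ∀ x y : E, B x y = B y x
  /-- the set of roots `Φ` -/
  Phi : Set E
  /-- the base `Π` of simple roots -/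
  Base : Set E
  base_sub : Base ⊆ Phi
  phi_finite : Phi.Finite
  zero_not_mem : (0 : E) ∉ Phi
  crystallographic : ∀ μ ∈ Phi, ∀ ν ∈ Phi, ∃ n : ℤ, B μ ν = n
  norm_two : ∀ μ ∈ Phi, B μ μ = 2
  neg_mem : ∀ μ ∈ Phi, -μ ∈ Phi
  base_pair : ∀ α ∈ Base, ∀ β ∈ Base, α ≠ β → B α β = 0 ∨ B α β = -1
  pair_range : ∀ μ ∈ Phi, ∀ α ∈ Base,
      B μ α = -2 ∨ B μ α = -1 ∨ B μ α = 0 ∨ B μ α = 1 ∨ B μ α = 2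
  pair_two_iff : ∀ μ ∈ Phi, ∀ α ∈ Base, (B μ α = 2 ↔ μ = α)
  pair_neg_two_iff : ∀ μ ∈ Phi, ∀ α ∈ Base, (B μ α = -2 ↔ μ = -α)
  add_mem : ∀ μ ∈ Phi, ∀ α ∈ Base, B μ α = -1 → μ + α ∈ Phi
  sub_mem : ∀ μ ∈ Phi, ∀ α ∈ Base, B μ α = 1 → μ - α ∈ Phi

namespace SimplyLacedDatum

variable {E : Type} [AddCommGroup E] [Module ℚ E] (D : SimplyLacedDatum E)

/-- The index set for the canonical basis of the adjoint representation:
one index for each root `μ ∈ Φ` (the vector `x_μ`) and one for each simple root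
`α ∈ Π` (the vector `h_α`). -/
def Idx : Type := {μ : E // μ ∈ D.Phi} ⊕ {α : E // α ∈ D.Base}

/-- The adjoint representation `R`, as the free `ℚ(q)`-module on `Idx`. -/
def R : Type := D.Idx →₀ Qq

instance : AddCommGroup D.R := inferInstanceAs (AddCommGroup (D.Idx →₀ Qq))
instance : Module Qq D.R := inferInstanceAs (Module Qq (D.Idx →₀ Qq))

/-- The canonical basis vector `x_μ`, for a root `μ ∈ Φ`. -/
def xv (μ : E) (h : μ ∈ D.Phi) : D.R := Finsupp.single (Sum.inl ⟨μ, h⟩) 1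

/-- The canonical basis vector `h_α`, for a simple root `α ∈ Π`. -/
def hv (α : E) (h : α ∈ D.Base) : D.R := Finsupp.single (Sum.inr ⟨α, h⟩) 1

/-- The `ℚ(q)`-linear operator on `R` sending the basis vector indexed by `i` to `v i`. -/
def opOf (v : D.Idx → D.R) : D.R →ₗ[Qq] D.R :=
  Finsupp.lsum Qq fun i => LinearMap.toSpanSingleton Qq D.R (v i)

open Classical in
/-- The images of the basis vectors under `E_α`. -/
def Evec (α : E) (hα : α ∈ D.Base) : D.Idx → D.R := fun i =>
  match i with
  | Sum.inl μ =>
      if h : D.B μ.1 α = -1 then D.xv (μ.1 + α) (D.add_mem μ.1 μ.2 α hα h)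
      else if D.B μ.1 α = -2 then D.hv α hα
      else 0
  | Sum.inr β =>
      if β.1 = α then (qv + qv⁻¹) • D.xv α (D.base_sub hα)
      else if D.B β.1 α = -1 then D.xv α (D.base_sub hα)
      else 0

open Classical in
/-- The images of the basis vectors under `F_α`. -/
def Fvec (α : E) (hα : α ∈ D.Base) : D.Idx → D.R := fun i =>
  match i with
  | Sum.inl μ =>
      if h : D.B μ.1 α = 1 then D.xv (μ.1 - α) (D.sub_mem μ.1 μ.2 α hα h)
      else if D.B μ.1 α = 2 then D.hv α hα
      else 0
  | Sum.inr β =>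
      if β.1 = α then (qv + qv⁻¹) • D.xv (-α) (D.neg_mem α (D.base_sub hα))
      else if D.B β.1 α = -1 then D.xv (-α) (D.neg_mem α (D.base_sub hα))
      else 0

/-- The images of the basis vectors under `K_α`: `K_α x_μ = q^{(α,μ)} x_μ`,
`K_α h_β = h_β`. -/
def Kvec (α : E) (hα : α ∈ D.Base) : D.Idx → D.R := fun i =>
  match i with
  | Sum.inl μ => qv ^ (D.B α μ.1).num • D.xv μ.1 μ.2
  | Sum.inr β => D.hv β.1 β.2

/-- The images of the basis vectors under `K_α⁻¹`: `K_α⁻¹ x_μ = q^{−(α,μ)} x_μ`,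
`K_α⁻¹ h_β = h_β`. -/
def Kinvvec (α : E) (hα : α ∈ D.Base) : D.Idx → D.R := fun i =>
  match i with
  | Sum.inl μ => qv ^ (-(D.B α μ.1).num) • D.xv μ.1 μ.2
  | Sum.inr β => D.hv β.1 β.2

/-- The operator `E_α` on the adjoint representation. -/
def opE (α : E) (hα : α ∈ D.Base) : D.R →ₗ[Qq] D.R := D.opOf (D.Evec α hα)

/-- The operator `F_α` on the adjoint representation. -/
def opF (α : E) (hα : α ∈ D.Base) : D.R →ₗ[Qq] D.R := D.opOf (D.Fvec α hα)

/-- The operator `K_α` on the adjoint representation. -/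
def opK (α : E) (hα : α ∈ D.Base) : D.R →ₗ[Qq] D.R := D.opOf (D.Kvec α hα)

/-- The operator `K_α⁻¹` on the adjoint representation. -/
def opKinv (α : E) (hα : α ∈ D.Base) : D.R →ₗ[Qq] D.R := D.opOf (D.Kinvvec α hα)

end SimplyLacedDatum

end


namespace SimplyLacedDatum
variable {E : Type} [AddCommGroup E] [Module ℚ E] (D : SimplyLacedDatum E)

lemma opOf_single (v : D.Idx → D.R) (i : D.Idx) (c : Qq) :
    D.opOf v (Finsupp.single i c) = c • v i := by
  erw [opOf, Finsupp.lsum_single]; rfl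

lemma opOf_xv (v : D.Idx → D.R) (μ : E) (h : μ ∈ D.Phi) :
    D.opOf v (D.xv μ h) = v (Sum.inl ⟨μ, h⟩) := by
  exact (D.opOf_single v (Sum.inl ⟨μ, h⟩) 1).trans (one_smul _ _)

lemma opOf_hv (v : D.Idx → D.R) (γ : E) (h : γ ∈ D.Base) :
    D.opOf v (D.hv γ h) = v (Sum.inr ⟨γ, h⟩) := by
  exact (D.opOf_single v (Sum.inr ⟨γ, h⟩) 1).trans (one_smul _ _)

lemma xv_congr {μ ν : E} (hμ : μ ∈ D.Phi) (hν : ν ∈ D.Phi) (h : μ = ν) :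
    D.xv μ hμ = D.xv ν hν := by subst h; rfl

lemma ext_basis (f g : D.R →ₗ[Qq] D.R)
    (h : ∀ i : D.Idx, f (Finsupp.single i 1) = g (Finsupp.single i 1)) : f = g := by
  refine Finsupp.lhom_ext' fun i => ?_
  ext
  exact h i

lemma qv_ne : qv ≠ 0 := RatFunc.X_ne_zero

lemma B_add (x y z : E) : D.B (x + y) z = D.B x z + D.B y z := by simp
lemma B_sub (x y z : E) : D.B (x - y) z = D.B x z - D.B y z := by simp
lemma B_neg (x z : E) : D.B (-x) z = -(D.B x z) := by simp
lemma B_neg₂ (x z : E) : D.B x (-z) = -(D.B x z) := by simp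

end SimplyLacedDatum

/-- on the adjoint representation `R`,
`E_α F_β − F_β E_α = δ_{αβ} (K_α − K_α⁻¹)/(q − q⁻¹)`; that is, `E_α` and `F_β` commute
for `α ≠ β`, and `(q − q⁻¹)(E_α F_α − F_α E_α) = K_α − K_α⁻¹`. -/
theorem SimplyLacedDatum.commutator_EF {E : Type} [AddCommGroup E] [Module ℚ E]
    (D : SimplyLacedDatum E) (α : E) (hα : α ∈ D.Base) (β : E) (hβ : β ∈ D.Base) :
    (α ≠ β → D.opE α hα ∘ₗ D.opF β hβ = D.opF β hβ ∘ₗ D.opE α hα) ∧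
    (qv - qv⁻¹) • (D.opE α hα ∘ₗ D.opF α hα - D.opF α hα ∘ₗ D.opE α hα) =
      D.opK α hα - D.opKinv α hα := by
  have h2a : D.B α α = 2 := D.norm_two α (D.base_sub hα)
  constructor
  · intro hne
    have hne' : ¬ (β = α) := fun h => hne h.symm
    have h2b : D.B β β = 2 := D.norm_two β (D.base_sub hβ)
    have hc : D.B β α = 0 ∨ D.B β α = -1 := D.base_pair β hβ α hα hne'
    have hsy : D.B α β = D.B β α := D.symm α β
    apply D.ext_basis
    intro i
    rcases i with ⟨μ, hμ⟩ | ⟨γ, hγ⟩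
    · show D.opE α hα (D.opF β hβ (D.xv μ hμ)) = D.opF β hβ (D.opE α hα (D.xv μ hμ))
      rw [opE, opF, opOf_xv, opOf_xv]
      rcases D.pair_range μ hμ β hβ with hb | hb | hb | hb | hb
      · -- B μ β = -2, μ = -β
        obtain rfl : μ = -β := (D.pair_neg_two_iff μ hμ β hβ).mp hb
        rcases hc with hc | hc <;>
          norm_num [Evec, Fvec, opOf_xv, opOf_hv, B_add, B_sub, B_neg, hc, hsy, h2a, h2b]
      · -- B μ β = -1
        rcases D.pair_range μ hμ α hα with ha | ha | ha | ha | ha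
        · obtain rfl : μ = -α := (D.pair_neg_two_iff μ hμ α hα).mp ha
          rw [B_neg, hsy] at hb
          rcases hc with hc | hc <;> rw [hc] at hb <;> norm_num at hb
        · rcases hc with hc | hc <;>
            norm_num [Evec, Fvec, opOf_xv, opOf_hv, B_add, B_sub, B_neg, ha, hb, hc, hsy, h2a, h2b]
        · rcases hc with hc | hc <;>
            norm_num [Evec, Fvec, opOf_xv, opOf_hv, B_add, B_sub, B_neg, ha, hb, hc, hsy, h2a, h2b]
        · rcases hc with hc | hc <;>
            norm_num [Evec, Fvec, opOf_xv, opOf_hv, B_add, B_sub, B_neg, ha, hb, hc, hsy, h2a, h2b]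
        · obtain rfl : μ = α := (D.pair_two_iff μ hμ α hα).mp ha
          rcases hc with hc | hc <;>
            norm_num [Evec, Fvec, opOf_xv, opOf_hv, B_add, B_sub, B_neg, hb, hc, hsy, h2a, h2b, hne']
      · -- B μ β = 0
        rcases D.pair_range μ hμ α hα with ha | ha | ha | ha | ha
        · obtain rfl : μ = -α := (D.pair_neg_two_iff μ hμ α hα).mp ha
          rw [B_neg, hsy] at hb
          rcases hc with hc | hc
          · norm_num [Evec, Fvec, opOf_xv, opOf_hv, B_add, B_sub, B_neg, hc, hsy, h2a, h2b,
              hne, hne']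
          · rw [hc] at hb; norm_num at hb
        · rcases hc with hc | hc <;>
            norm_num [Evec, Fvec, opOf_xv, opOf_hv, B_add, B_sub, B_neg, ha, hb, hc, hsy, h2a, h2b]
        · rcases hc with hc | hc <;>
            norm_num [Evec, Fvec, opOf_xv, opOf_hv, B_add, B_sub, B_neg, ha, hb, hc, hsy, h2a, h2b]
        · rcases hc with hc | hc <;>
            norm_num [Evec, Fvec, opOf_xv, opOf_hv, B_add, B_sub, B_neg, ha, hb, hc, hsy, h2a, h2b]
        · obtain rfl : μ = α := (D.pair_two_iff μ hμ α hα).mp ha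
          rcases hc with hc | hc <;>
            norm_num [Evec, Fvec, opOf_xv, opOf_hv, B_add, B_sub, B_neg, hb, hc, hsy, h2a, h2b, hne']
      · -- B μ β = 1
        rcases D.pair_range μ hμ α hα with ha | ha | ha | ha | ha
        · obtain rfl : μ = -α := (D.pair_neg_two_iff μ hμ α hα).mp ha
          rw [B_neg, hsy] at hb
          rcases hc with hc | hc
          · rw [hc] at hb; norm_num at hb
          · norm_num [Evec, Fvec, opOf_xv, opOf_hv, B_add, B_sub, B_neg, hc, hsy, h2a, h2b,
              hne, hne']
            exact D.xv_congr _ _ (by abel)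
        · rcases hc with hc | hc <;>
            norm_num [Evec, Fvec, opOf_xv, opOf_hv, B_add, B_sub, B_neg, ha, hb, hc, hsy, h2a, h2b] <;>
            exact D.xv_congr _ _ (by abel)
        · rcases hc with hc | hc <;>
            norm_num [Evec, Fvec, opOf_xv, opOf_hv, B_add, B_sub, B_neg, ha, hb, hc, hsy, h2a, h2b]
        · rcases hc with hc | hc <;>
            norm_num [Evec, Fvec, opOf_xv, opOf_hv, B_add, B_sub, B_neg, ha, hb, hc, hsy, h2a, h2b]
        · obtain rfl : μ = α := (D.pair_two_iff μ hμ α hα).mp ha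
          rw [hsy] at hb
          rcases hc with hc | hc <;> rw [hc] at hb <;> norm_num at hb
      · -- B μ β = 2, μ = β
        obtain rfl : μ = β := (D.pair_two_iff μ hμ β hβ).mp hb
        rcases hc with hc | hc <;>
          norm_num [Evec, Fvec, opOf_xv, opOf_hv, B_add, B_sub, B_neg, hc, hsy, h2a, h2b, hne'] <;>
          exact D.xv_congr _ _ (by abel)
    · show D.opE α hα (D.opF β hβ (D.hv γ hγ)) = D.opF β hβ (D.opE α hα (D.hv γ hγ))
      rw [opE, opF, opOf_hv, opOf_hv]
      simp only [Evec, Fvec]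
      split_ifs <;> rcases hc with hc | hc <;>
        norm_num [Evec, Fvec, opOf_xv, opOf_hv, map_smul, map_zero, B_add, B_sub, B_neg,
          hc, hsy, h2a, h2b, hne']
  · apply D.ext_basis
    intro i
    rcases i with ⟨μ, hμ⟩ | ⟨γ, hγ⟩
    · show (qv - qv⁻¹) • (D.opE α hα (D.opF α hα (D.xv μ hμ)) - D.opF α hα (D.opE α hα (D.xv μ hμ)))
        = D.opK α hα (D.xv μ hμ) - D.opKinv α hα (D.xv μ hμ)
      rw [opE, opF, opK, opKinv, opOf_xv, opOf_xv, opOf_xv, opOf_xv]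
      have hsm : D.B α μ = D.B μ α := D.symm α μ
      rcases D.pair_range μ hμ α hα with ha | ha | ha | ha | ha
      · obtain rfl : μ = -α := (D.pair_neg_two_iff μ hμ α hα).mp ha
        norm_num [Evec, Fvec, Kvec, Kinvvec, opOf_xv, opOf_hv, B_neg, B_neg₂, h2a]
        rw [smul_smul, ← neg_smul, ← sub_smul]
        congr 1
        ring_nf
      · norm_num [Evec, Fvec, Kvec, Kinvvec, opOf_xv, opOf_hv, B_add, B_sub, h2a, ha, hsm]
        try rw [← neg_smul, ← sub_smul]
        try rw [← sub_smul]
        try (congr 1; ring)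
      · norm_num [Evec, Fvec, Kvec, Kinvvec, opOf_xv, opOf_hv, B_add, B_sub, h2a, ha, hsm]
        try rw [← neg_smul, ← sub_smul]
        try rw [← sub_smul]
        try (congr 1; ring)
      · norm_num [Evec, Fvec, Kvec, Kinvvec, opOf_xv, opOf_hv, B_add, B_sub, h2a, ha, hsm]
        try rw [← neg_smul, ← sub_smul]
        try rw [← sub_smul]
        try (congr 1; ring)
      · obtain rfl : μ = α := (D.pair_two_iff μ hμ α hα).mp ha
        norm_num [Evec, Fvec, Kvec, Kinvvec, opOf_xv, opOf_hv, B_add, B_sub, h2a]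
        rw [smul_smul, ← sub_smul]
        congr 1
        ring_nf
    · show (qv - qv⁻¹) • (D.opE α hα (D.opF α hα (D.hv γ hγ)) - D.opF α hα (D.opE α hα (D.hv γ hγ)))
        = D.opK α hα (D.hv γ hγ) - D.opKinv α hα (D.hv γ hγ)
      rw [opE, opF, opK, opKinv, opOf_hv, opOf_hv, opOf_hv, opOf_hv]
      by_cases hga : γ = α
      · subst hga
        norm_num [Evec, Fvec, Kvec, Kinvvec, opOf_xv, opOf_hv, map_smul, B_neg, h2a]
      · by_cases hga' : D.B γ α = -1
        · norm_num [Evec, Fvec, Kvec, Kinvvec, opOf_xv, opOf_hv, map_smul, B_neg, h2a, hga, hga']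
        · norm_num [Evec, Fvec, Kvec, Kinvvec, opOf_xv, opOf_hv, map_smul, B_neg, h2a, hga, hga']
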